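/- In any reserve system, a matching μ is eligibility-compliant, respects priorities, is non-wasteful, and has maximum cardinality if and only if there exists an eligibility-compliant matching μ₀ of maximum cardinality such that μ is obtained from μ₀ by a finite (possibly empty) sequence of swap steps and μ is terminal. -/

import Mathlib

open Finset

variable {I C : Type*}

/-- Agent `i` is eligible for category `c` when `i ≻_c ∅`. -/
def Eligible (prio : C → Option I → Option I → Prop) (i : I) (c : C) : Prop :=
  prio c (some i) none

/-- `μ` is a matching: the set of agents assigned to each category `c`
has at most `q c` elements. -/
def IsMatching [Fintype I] [DecidableEq C] (q : C → ℕ) (μ : I → Option C) : Prop :=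
  ∀ c : C, (Finset.univ.filter (fun i => μ i = some c)).card ≤ q c

/-- `μ` is eligibility-compliant: assigned agents are eligible. -/
def Compliant (prio : C → Option I → Option I → Prop) (μ : I → Option C) : Prop :=
  ∀ (i : I) (c : C), μ i = some c → Eligible prio i c

/-- The number of agents matched under `μ`. -/
def matchedCount [Fintype I] (μ : I → Option C) : ℕ :=
  (Finset.univ.filter (fun i => (μ i).isSome)).card

/-- `μ` has maximum cardinality among eligibility-compliant matchings. -/
def MaxCard [Fintype I] [DecidableEq C] (q : C → ℕ)
    (prio : C → Option I → Option I → Prop) (μ : I → Option C) : Prop :=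
  ∀ μ' : I → Option C, IsMatching q μ' → Compliant prio μ' →
    matchedCount μ' ≤ matchedCount μ

/-- Non-wastefulness: an eligible unmatched agent implies the category is full. -/
def NonWasteful [Fintype I] [DecidableEq C] (q : C → ℕ)
    (prio : C → Option I → Option I → Prop) (μ : I → Option C) : Prop :=
  ∀ (i : I) (c : C), Eligible prio i c → μ i = none →
    (Finset.univ.filter (fun j => μ j = some c)).card = q c

/-- Respect for priorities: a matched agent has higher priority (at its
category) than every unmatched agent. -/
def RespectsPriorities (prio : C → Option I → Option I → Prop)
    (μ : I → Option C) : Prop :=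
  ∀ (i i' : I) (c : C), μ i = some c → μ i' = none → prio c (some i) (some i')

/-- `μ'` is obtained from `μ` by a swap step at category `c`: an unmatched
agent `i`, eligible for `c`, replaces the `≻_c`-least agent `i'` currently
assigned to `c`, where `i ≻_c i'`. -/
def SwapStep (prio : C → Option I → Option I → Prop) (c : C)
    (μ μ' : I → Option C) : Prop :=
  ∃ i i' : I,
    μ i = none ∧ Eligible prio i c ∧
    μ i' = some c ∧
    (∀ j : I, μ j = some c → j ≠ i' → prio c (some j) (some i')) ∧
    prio c (some i) (some i') ∧
    μ' i = some c ∧ μ' i' = none ∧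
    (∀ j : I, j ≠ i → j ≠ i' → μ' j = μ j)

/-- One swap step between eligibility-compliant matchings. -/
def SwapRel [Fintype I] [DecidableEq C] (q : C → ℕ)
    (prio : C → Option I → Option I → Prop) (μ μ' : I → Option C) : Prop :=
  IsMatching q μ ∧ Compliant prio μ ∧ IsMatching q μ' ∧ Compliant prio μ' ∧
    ∃ c : C, SwapStep prio c μ μ'

/-- `μ` is terminal: no swap step applies to `μ`. -/
def Terminal (prio : C → Option I → Option I → Prop) (μ : I → Option C) : Prop :=
  ¬ ∃ (i i' : I) (c : C),
      μ i = none ∧ Eligible prio i c ∧ μ i' = some c ∧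
      (∀ j : I, μ j = some c → j ≠ i' → prio c (some j) (some i')) ∧
      prio c (some i) (some i')

/-- The strict part `▷` of the precedence preorder, extended to `C ∪ {∅}`
by `c ▷ ∅` for every category `c`. -/
def StrictPrec (prec : C → C → Prop) : Option C → Option C → Prop
  | some c, some c' => prec c c' ∧ ¬ prec c' c
  | some _, none => True
  | none, _ => False

/-- The number of agents assigned to preferential treatment categories. -/
def benefCount [Fintype I] [DecidableEq C] (Cstar : Finset C)
    (μ : I → Option C) : ℕ :=
  ∑ c ∈ Cstar, (Finset.univ.filter (fun i => μ i = some c)).card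

/-- `μ` is a maximum beneficiary assignment. -/
def MaxBenef [Fintype I] [DecidableEq C] (q : C → ℕ)
    (prio : C → Option I → Option I → Prop) (Cstar : Finset C)
    (μ : I → Option C) : Prop :=
  ∀ μ' : I → Option C, IsMatching q μ' → Compliant prio μ' →
    benefCount Cstar μ' ≤ benefCount Cstar μ

/-- Order preservation by swapping. -/
def OrderPresSwap (prio : C → Option I → Option I → Prop) (prec : C → C → Prop)
    (μ : I → Option C) : Prop :=
  ¬ ∃ (i j : I) (ci cj : C),
      μ i = some ci ∧ μ j = some cj ∧
      StrictPrec prec (some cj) (some ci) ∧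
      prio cj (some i) (some j) ∧
      Eligible prio j ci ∧ Eligible prio i cj

/-- Respect for precedence over categories. -/
def RespectsPrec [Fintype I] [DecidableEq C] (q : C → ℕ)
    (prio : C → Option I → Option I → Prop) (Cstar : Finset C)
    (prec : C → C → Prop) (μ : I → Option C) : Prop :=
  ¬ ∃ (i j : I) (cj : C),
      μ j = some cj ∧
      StrictPrec prec (some cj) (μ i) ∧
      prio cj (some i) (some j) ∧
      ∃ μ' : I → Option C,
        IsMatching q μ' ∧ Compliant prio μ' ∧
        (∀ (k : I) (ck : C), μ k = some ck →
          StrictPrec prec (some ck) (some cj) → μ' k = μ k) ∧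
        (∀ ℓ : I, μ ℓ = some cj → prio cj (some ℓ) (some i) → μ' ℓ = μ ℓ) ∧
        μ' i = some cj ∧
        MaxCard q prio μ' ∧ MaxBenef q prio Cstar μ'

/-- Order preservation for a hybrid sequential reserve system with open
categories `c01` (processed first) and `c02` (processed last). -/
def OrderPresHybrid (prio : C → Option I → Option I → Prop) (Cstar : Finset C)
    (c01 c02 : C) (μ : I → Option C) : Prop :=
  ∀ (i j : I) (cj : C), μ j = some cj → prio cj (some i) (some j) →
    ((∀ ci : C, μ i = some ci → (ci ∈ Cstar ∨ ci = c02) →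
        Eligible prio j ci → cj ≠ c01) ∧
     ((cj ∈ Cstar ∨ cj = c01) → Eligible prio i cj → μ i ≠ some c02))

/-- `P'` is an `i`-improvement of `P`: the orders agree off `i`, and `i`'s
priority weakly increases in every category. -/
def Improves (i : I) (P P' : C → Option I → Option I → Prop) : Prop :=
  ∀ c : C,
    (∀ x y : Option I, x ≠ some i → y ≠ some i → (P' c x y ↔ P c x y)) ∧
    (∀ x : Option I, x ≠ some i → P c (some i) x → P' c (some i) x)


private lemma exists_least {α : Type*} (r : α → α → Prop)
    (htot : ∀ a b : α, a ≠ b → r a b ∨ r b a)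
    (htrans : ∀ a b c : α, r a b → r b c → r a c)
    (s : Finset α) (hs : s.Nonempty) :
    ∃ m ∈ s, ∀ x ∈ s, x ≠ m → r x m := by
  induction hs using Finset.Nonempty.cons_induction with
  | singleton a =>
      exact ⟨a, Finset.mem_singleton_self a,
        fun x hx hne => absurd (Finset.mem_singleton.mp hx) hne⟩
  | cons a s ha hs ih =>
      obtain ⟨m, hm, hmin⟩ := ih
      rcases htot a m (by rintro rfl; exact ha hm) with h | h
      · refine ⟨m, Finset.mem_cons_of_mem hm, fun x hx hne => ?_⟩
        rcases Finset.mem_cons.mp hx with rfl | hx'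
        · exact h
        · exact hmin x hx' hne
      · refine ⟨a, Finset.mem_cons_self a s, fun x hx hne => ?_⟩
        rcases Finset.mem_cons.mp hx with rfl | hx'
        · exact absurd rfl hne
        · rcases eq_or_ne x m with rfl | hxm
          · exact h
          · exact htrans x m a (hmin x hx' hxm) h

private lemma swap_matchedCount [Fintype I] [DecidableEq I] [DecidableEq C]
    {prio : C → Option I → Option I → Prop} {c : C} {ν ν' : I → Option C}
    (h : SwapStep prio c ν ν') : matchedCount ν' = matchedCount ν := by
  obtain ⟨i, i', hi, _, hi', _, _, hνi, hνi', hoff⟩ := h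
  have hii' : i ≠ i' := by rintro rfl; rw [hi] at hi'; exact nomatch hi'
  have hset : (Finset.univ.filter (fun j => (ν' j).isSome)) =
      insert i ((Finset.univ.filter (fun j => (ν j).isSome)).erase i') := by
    ext j
    simp only [Finset.mem_insert, Finset.mem_erase, Finset.mem_filter,
      Finset.mem_univ, true_and]
    rcases eq_or_ne j i with rfl | hji
    · simp [hνi]
    · rcases eq_or_ne j i' with rfl | hji'
      · simp [hνi', hji]
      · rw [hoff j hji hji']
        tauto
  have hi'mem : i' ∈ Finset.univ.filter (fun j => (ν j).isSome) := by
    simp [hi']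
  have hinot : i ∉ (Finset.univ.filter (fun j => (ν j).isSome)).erase i' := by
    simp [hi]
  rw [matchedCount, matchedCount, hset, Finset.card_insert_of_notMem hinot,
    Finset.card_erase_add_one hi'mem]

/-- A matching satisfies the four fundamental axioms iff it is
MMA-induced, i.e. it is a terminal matching obtained from some
eligibility-compliant matching of maximum cardinality by finitely many
swap steps. -/
theorem four_axioms_iff_MMA_induced
    [Fintype I] [Fintype C] [DecidableEq C]
    (q : C → ℕ) (prio : C → Option I → Option I → Prop)
    (hstrict : ∀ c : C, IsStrictTotalOrder (Option I) (prio c))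
    (μ : I → Option C) (hμ : IsMatching q μ) :
    (Compliant prio μ ∧ RespectsPriorities prio μ ∧ NonWasteful q prio μ ∧
        MaxCard q prio μ) ↔
      ∃ μ₀ : I → Option C,
        IsMatching q μ₀ ∧ Compliant prio μ₀ ∧ MaxCard q prio μ₀ ∧
          Relation.ReflTransGen (SwapRel q prio) μ₀ μ ∧ Terminal prio μ := by
  classical
  constructor
  · rintro ⟨hcomp, hrp, hnw, hmax⟩
    refine ⟨μ, hμ, hcomp, hmax, Relation.ReflTransGen.refl, ?_⟩
    rintro ⟨i, i', c, hinone, _, hi'c, _, hlt⟩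
    haveI := hstrict c
    have h1 : prio c (some i') (some i) := hrp i' i c hi'c hinone
    exact irrefl_of (prio c) (some i) (trans_of (prio c) hlt h1)
  · rintro ⟨μ₀, hm0, hc0, hmax0, hchain, hterm⟩
    -- compliance and matched-count invariance along the chain
    have key : Compliant prio μ ∧ matchedCount μ = matchedCount μ₀ := by
      clear hμ hterm
      induction hchain with
      | refl => exact ⟨hc0, rfl⟩
      | tail _ hstep ih =>
          obtain ⟨_, _, _, hcomp', c, hsw⟩ := hstep
          exact ⟨hcomp', (swap_matchedCount hsw).trans ih.2⟩
    obtain ⟨hcomp, hcount⟩ := key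
    have hmax : MaxCard q prio μ := fun μ' h1 h2 => hcount ▸ hmax0 μ' h1 h2
    have hrp : RespectsPriorities prio μ := by
      intro i i' c hic hi'none
      haveI := hstrict c
      have hne : (some i : Option I) ≠ some i' := by
        intro h
        rw [Option.some_inj] at h
        subst h
        rw [hic] at hi'none
        exact nomatch hi'none
      rcases trichotomous_of (prio c) (some i) (some i') with h | h | h
      · exact h
      · exact absurd h hne
      · exfalso
        have helig' : Eligible prio i' c :=
          trans_of (prio c) h (hcomp i c hic)
        have hsne : (Finset.univ.filter (fun j => μ j = some c)).Nonempty :=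
          ⟨i, by simp [hic]⟩
        obtain ⟨m, hm, hmin⟩ := exists_least (fun a b => prio c (some a) (some b))
          (fun a b hab => by
            rcases trichotomous_of (prio c) (some a) (some b) with h' | h' | h'
            · exact Or.inl h'
            · exact absurd (Option.some_inj.mp h') hab
            · exact Or.inr h')
          (fun a b d hab hbd => trans_of (prio c) hab hbd)
          _ hsne
        rw [Finset.mem_filter] at hm
        have hi'm : prio c (some i') (some m) := by
          rcases eq_or_ne i m with rfl | him
          · exact h
          · exact trans_of (prio c) h
              (hmin i (by simp [hic]) him)
        exact hterm ⟨i', m, c, hi'none, helig', hm.2,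
          fun j hj hjm => hmin j (by simp [hj]) hjm, hi'm⟩
    have hnw : NonWasteful q prio μ := by
      intro i c helig hinone
      by_contra hne
      have hlt : (Finset.univ.filter (fun j => μ j = some c)).card < q c :=
        lt_of_le_of_ne (hμ c) hne
      set μ' : I → Option C := Function.update μ i (some c) with hμ'def
      have hupdate_ne : ∀ j, j ≠ i → μ' j = μ j := fun j hj =>
        Function.update_of_ne hj _ _
      have hupdate_i : μ' i = some c := Function.update_self _ _ _
      have hfiltc : Finset.univ.filter (fun j => μ' j = some c) =
          insert i (Finset.univ.filter (fun j => μ j = some c)) := by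
        ext j
        simp only [Finset.mem_insert, Finset.mem_filter, Finset.mem_univ, true_and]
        rcases eq_or_ne j i with rfl | hji
        · simp [hupdate_i]
        · rw [hupdate_ne j hji]; tauto
      have hfiltother : ∀ c' : C, c' ≠ c →
          Finset.univ.filter (fun j => μ' j = some c') =
            Finset.univ.filter (fun j => μ j = some c') := by
        intro c' hc'
        ext j
        simp only [Finset.mem_filter, Finset.mem_univ, true_and]
        rcases eq_or_ne j i with rfl | hji
        · rw [hupdate_i, hinone]
          constructor
          · intro h; exact absurd (Option.some_inj.mp h).symm hc'
          · intro h; exact nomatch h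
        · rw [hupdate_ne j hji]
      have hinotmem : i ∉ Finset.univ.filter (fun j => μ j = some c) := by
        simp [hinone]
      have hmatch' : IsMatching q μ' := by
        intro c'
        rcases eq_or_ne c' c with rfl | hc'
        · rw [hfiltc, Finset.card_insert_of_notMem hinotmem]
          exact hlt
        · rw [hfiltother c' hc']
          exact hμ c'
      have hcomp' : Compliant prio μ' := by
        intro j c' hj
        rcases eq_or_ne j i with rfl | hji
        · rw [hupdate_i] at hj
          rw [← Option.some_inj.mp hj]
          exact helig
        · exact hcomp j c' (by rw [← hupdate_ne j hji]; exact hj)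
      have hcountgt : matchedCount μ' = matchedCount μ + 1 := by
        have : Finset.univ.filter (fun j => (μ' j).isSome) =
            insert i (Finset.univ.filter (fun j => (μ j).isSome)) := by
          ext j
          simp only [Finset.mem_insert, Finset.mem_filter, Finset.mem_univ, true_and]
          rcases eq_or_ne j i with rfl | hji
          · simp [hupdate_i]
          · rw [hupdate_ne j hji]; tauto
        rw [matchedCount, matchedCount, this,
          Finset.card_insert_of_notMem (by simp [hinone])]
      have := hmax μ' hmatch' hcomp'
      omega
    exact ⟨hcomp, hrp, hnw, hmax⟩
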